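/- In an atom-free MVS M, for every m ∈ M* and every positive integer n there exists m' ∈ M* such that n·m' ⊴ m, where n·m' denotes the n-fold sum m' + ... + m'. -/

import Mathlib

universe u v w

structure MVS (M : Type u) where
  add : M → M → M
  e : M
  assoc : ∀ a b c : M, add (add a b) c = add a (add b c)
  add_e : ∀ a : M, add a e = a
  e_add : ∀ a : M, add e a = a
  eq_e_of_add_eq_e : ∀ a b : M, add a b = e → a = e ∧ b = e
  exists_common : ∀ a b : M, a ≠ e → b ≠ e →
    ∃ c, c ≠ e ∧ (∃ d, add c d = a) ∧ (∃ d, add c d = b)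
  nontrivial : ∃ a : M, a ≠ e

variable {M : Type u} {X : Type v}

/-- `a ⊴ b` iff there is `c` with `a + c = b`. -/
def MVS.le (S : MVS M) (a b : M) : Prop := ∃ c, S.add a c = b

/-- `a ◁ b` iff there is `c ≠ e` with `a + c = b`. -/
def MVS.lt (S : MVS M) (a b : M) : Prop := ∃ c, c ≠ S.e ∧ S.add a c = b

def MVS.Commutative (S : MVS M) : Prop := ∀ a b, S.add a b = S.add b a

/-- An MVS is atom-free if it is commutative and every `m ≠ e` admits `n ≠ e` with `n ◁ m`. -/
def MVS.AtomFree (S : MVS M) : Prop :=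
  S.Commutative ∧ ∀ m, m ≠ S.e → ∃ n, n ≠ S.e ∧ S.lt n m

/-- A quasimetric function: triangle inequality and `f x x = e`. -/
def IsQuasimetric (S : MVS M) (f : X → X → M) : Prop :=
  (∀ x y z, S.le (f x z) (S.add (f x y) (f y z))) ∧ ∀ x, f x x = S.e

/-- Open ball `B_f(x,m) = {y | f x y ◁ m}`. -/
def ball (S : MVS M) (f : X → X → M) (x : X) (m : M) : Set X := {y | S.lt (f x y) m}

/-- Closed ball `B̄_f(x,m) = {y | f x y ⊴ m}`. -/
def closedBall (S : MVS M) (f : X → X → M) (x : X) (m : M) : Set X := {y | S.le (f x y) m}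

/-- The topology induced by a quasimetric function: open balls form a neighbourhood base. -/
def qTopology (S : MVS M) (f : X → X → M) : TopologicalSpace X :=
  TopologicalSpace.mkOfNhds fun x => ⨅ m ∈ {m : M | m ≠ S.e}, Filter.principal (ball S f x m)

/-- Entourage `U_m = {(x,y) | f x y ⊴ m}`. -/
def ent (S : MVS M) (f : X → X → M) (m : M) : Set (X × X) := {p | S.le (f p.1 p.2) m}

/-- `qcomp A B = A ∘ B = {(x,z) | ∃ y, (x,y) ∈ B ∧ (y,z) ∈ A}`. -/
def qcomp (A B : Set (X × X)) : Set (X × X) := {p | ∃ y, (p.1, y) ∈ B ∧ (y, p.2) ∈ A}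

def IsQuasiUniformity (U : Set (Set (X × X))) : Prop :=
  U.Nonempty ∧
  (∀ u ∈ U, ∀ x : X, (x, x) ∈ u) ∧
  (∀ u ∈ U, ∀ v : Set (X × X), u ⊆ v → v ∈ U) ∧
  (∀ u ∈ U, ∀ v ∈ U, u ∩ v ∈ U) ∧
  (∀ u ∈ U, ∃ v ∈ U, qcomp v v ⊆ u)

def IsBaseOf (B U : Set (Set (X × X))) : Prop := B ⊆ U ∧ ∀ u ∈ U, ∃ b ∈ B, b ⊆ u

/-- `U + V` : the intersection of all entourages `U_n` containing `V ∘ U`. -/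
def addEnt (S : MVS M) (f : X → X → M) (A B : Set (X × X)) : Set (X × X) :=
  ⋂₀ {w | (∃ m, ent S f m = w) ∧ qcomp B A ⊆ w}

/-- The topology induced by a base of a quasiuniformity: sections `U[x]` form a
neighbourhood base. -/
def quTopology (B : Set (Set (X × X))) : TopologicalSpace X :=
  TopologicalSpace.mkOfNhds fun x => ⨅ u ∈ B, Filter.principal {y | (x, y) ∈ u}

/-- `n`-fold sum `m + ⋯ + m`. -/
def nfold (S : MVS M) : ℕ → M → M
  | 0, _ => S.e
  | Nat.succ n, m => S.add m (nfold S n m)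

lemma MVS.medial (S : MVS M) (hc : S.Commutative) (a b c d : M) :
    S.add (S.add a b) (S.add c d) = S.add (S.add a c) (S.add b d) := by
  rw [S.assoc, ← S.assoc b c d, hc b c, S.assoc c b d, ← S.assoc]

lemma MVS.le_trans (S : MVS M) {a b c : M} (h1 : S.le a b) (h2 : S.le b c) : S.le a c := by
  obtain ⟨x, hx⟩ := h1; obtain ⟨y, hy⟩ := h2
  exact ⟨S.add x y, by rw [← S.assoc, hx, hy]⟩

lemma MVS.add_le_add (S : MVS M) (hc : S.Commutative) {a b c d : M}
    (h1 : S.le a b) (h2 : S.le c d) : S.le (S.add a c) (S.add b d) := by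
  obtain ⟨x, hx⟩ := h1; obtain ⟨y, hy⟩ := h2
  exact ⟨S.add x y, by rw [S.medial hc, hx, hy]⟩

lemma nfold_add (S : MVS M) (k n : ℕ) (a : M) :
    nfold S (k + n) a = S.add (nfold S k a) (nfold S n a) := by
  induction k with
  | zero => simp [nfold, S.e_add]
  | succ k ih =>
      have : k + 1 + n = (k + n) + 1 := by omega
      rw [this]
      show S.add a (nfold S (k + n) a) = _
      rw [ih, ← S.assoc]; rfl

lemma nfold_le (S : MVS M) (hc : S.Commutative) {a b : M} (n : ℕ) (h : S.le a b) :
    S.le (nfold S n a) (nfold S n b) := by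
  induction n with
  | zero => exact ⟨S.e, S.add_e _⟩
  | succ n ih => exact S.add_le_add hc h ih

lemma nfold_double (S : MVS M) (hc : S.Commutative) (n : ℕ) (a : M) :
    nfold S n (S.add a a) = S.add (nfold S n a) (nfold S n a) := by
  induction n with
  | zero => simp [nfold, S.add_e]
  | succ n ih =>
      show S.add (S.add a a) (nfold S n (S.add a a)) = _
      rw [ih, S.medial hc]; rfl

lemma MVS.halve (S : MVS M) (hAF : S.AtomFree) {m : M} (hm : m ≠ S.e) :
    ∃ d, d ≠ S.e ∧ S.le (S.add d d) m := by
  obtain ⟨a, ha, c, hce, hac⟩ := hAF.2 m hm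
  obtain ⟨d, hd, ⟨x, hx⟩, ⟨y, hy⟩⟩ := S.exists_common a c ha hce
  refine ⟨d, hd, S.add x y, ?_⟩
  rw [← S.medial hAF.1, hx, hy, hac]

theorem stmt_19 (S : MVS M) (hAF : S.AtomFree) :
    ∀ m : M, m ≠ S.e → ∀ n : ℕ, 0 < n → ∃ m', m' ≠ S.e ∧ S.le (nfold S n m') m := by
  intro m hm n hn
  -- first: for every k, ∃ m' ≠ e with nfold (2^k) m' ⊴ m
  have key : ∀ k : ℕ, ∃ m', m' ≠ S.e ∧ S.le (nfold S (2 ^ k) m') m := by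
    intro k
    induction k with
    | zero =>
        refine ⟨m, hm, S.e, ?_⟩
        show S.add (S.add m (nfold S 0 m)) S.e = m
        simp [nfold, S.add_e]
    | succ k ih =>
        obtain ⟨m', hm', hle⟩ := ih
        obtain ⟨d, hd, hdd⟩ := S.halve hAF hm'
        refine ⟨d, hd, ?_⟩
        have h1 : S.le (nfold S (2 ^ k) (S.add d d)) (nfold S (2 ^ k) m') :=
          nfold_le S hAF.1 _ hdd
        have h2 : nfold S (2 ^ (k + 1)) d = nfold S (2 ^ k) (S.add d d) := by
          rw [nfold_double S hAF.1, pow_succ, Nat.mul_two, nfold_add]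
        rw [h2]
        exact S.le_trans h1 hle
  obtain ⟨m', hm', hle⟩ := key n
  refine ⟨m', hm', S.le_trans ?_ hle⟩
  have hnn : n ≤ 2 ^ n := Nat.le_of_lt (Nat.lt_two_pow_self (n := n))
  refine ⟨nfold S (2 ^ n - n) m', ?_⟩
  rw [← nfold_add]
  congr 1
  omega
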